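/- (Opial lemma, continuous form.) Let S ⊆ H be a nonempty subset and x : [0, ∞) → H a mapping. Assume: (i) for every z ∈ S, the limit lim_{t→+∞} ‖x(t) − z‖ exists in ℝ; and (ii) every weak sequential cluster point of x belongs to S, i.e. whenever tₙ → +∞ and x(tₙ) converges weakly to some x̄ ∈ H (meaning ⟪x(tₙ) − x̄, h⟫ → 0 for every h ∈ H), then x̄ ∈ S. Then there exists x̄ ∈ S such that x(t) converges weakly to x̄ as t → +∞, i.e. ⟪x(t) − x̄, h⟫ → 0 for every h ∈ H. -/

import Mathlib

open RealInnerProductSpace Filter Topology Set Metric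

lemma weakBW {H : Type*} [NormedAddCommGroup H] [InnerProductSpace ℝ H] [CompleteSpace H]
    (u : ℕ → H) (C : ℝ) (hC : ∀ n, ‖u n‖ ≤ C) :
    ∃ (xbar : H) (φ : ℕ → ℕ), StrictMono φ ∧
      ∀ h : H, Tendsto (fun n => ⟪u (φ n) - xbar, h⟫) atTop (nhds 0) := by
  have hC0 : 0 ≤ C := (norm_nonneg _).trans (hC 0)
  -- diagonal via compactness of product
  set g : ℕ → ℕ → ℝ := fun n m => ⟪u n, u m⟫ with hg
  have hgmem : ∀ n, g n ∈ Set.pi (univ : Set ℕ) (fun _ => Icc (-(C*C)) (C*C)) := by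
    intro n m _
    have := abs_real_inner_le_norm (u n) (u m)
    have hb : |g n m| ≤ C * C := le_trans this
      (mul_le_mul (hC n) (hC m) (norm_nonneg _) hC0)
    exact abs_le.1 hb
  have hK : IsCompact (Set.pi (univ : Set ℕ) (fun _ : ℕ => Icc (-(C*C)) (C*C))) :=
    isCompact_univ_pi fun _ => isCompact_Icc
  obtain ⟨L, -, φ, hφ, hLconv⟩ := hK.isSeqCompact (x := g) (fun n => hgmem n)
  have hLm : ∀ m, Tendsto (fun n => ⟪u (φ n), u m⟫) atTop (nhds (L m)) := by
    intro m
    have := (tendsto_pi_nhds.1 hLconv) m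
    exact this
  -- the closed span
  set K : Submodule ℝ H := (Submodule.span ℝ (Set.range u)).topologicalClosure with hKdef
  haveI : CompleteSpace K :=
    (Submodule.isClosed_topologicalClosure _).completeSpace_coe
  have humem : ∀ n, u n ∈ K :=
    fun n => (Submodule.le_topologicalClosure _) (Submodule.subset_span ⟨n, rfl⟩)
  -- convergence on the span
  have hspan : ∀ v ∈ Submodule.span ℝ (Set.range u),
      ∃ l, Tendsto (fun n => ⟪u (φ n), v⟫) atTop (nhds l) := by
    intro v hv
    induction hv using Submodule.span_induction with
    | mem x hx => obtain ⟨m, rfl⟩ := hx; exact ⟨L m, hLm m⟩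
    | zero => exact ⟨0, by simpa using tendsto_const_nhds⟩
    | add x y hx hy ihx ihy =>
        obtain ⟨lx, hlx⟩ := ihx; obtain ⟨ly, hly⟩ := ihy
        exact ⟨lx + ly, by simpa [inner_add_right] using hlx.add hly⟩
    | smul a x hx ihx =>
        obtain ⟨lx, hlx⟩ := ihx
        exact ⟨a * lx, by simpa [real_inner_smul_right] using hlx.const_mul a⟩
  -- Cauchy on the closure
  have hcauchy : ∀ v : H, v ∈ K → CauchySeq (fun n => ⟪u (φ n), v⟫) := by
    intro v hv
    rw [Metric.cauchySeq_iff]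
    intro ε hε
    have hv' : v ∈ closure ((Submodule.span ℝ (Set.range u)) : Set H) := hv
    obtain ⟨w, hw, hwv⟩ := Metric.mem_closure_iff.1 hv' (ε / (3 * (C + 1)))
      (by positivity)
    obtain ⟨l, hl⟩ := hspan w hw
    have hcw : CauchySeq (fun n => ⟪u (φ n), w⟫) := hl.cauchySeq
    obtain ⟨N, hN⟩ := Metric.cauchySeq_iff.1 hcw (ε / 3) (by positivity)
    refine ⟨N, fun m hm n hn => ?_⟩
    have key : ∀ k, |⟪u (φ k), v⟫ - ⟪u (φ k), w⟫| ≤ ε / 3 := by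
      intro k
      have : ⟪u (φ k), v⟫ - ⟪u (φ k), w⟫ = ⟪u (φ k), v - w⟫ := by
        rw [inner_sub_right]
      rw [this]
      calc |⟪u (φ k), v - w⟫| ≤ ‖u (φ k)‖ * ‖v - w‖ := abs_real_inner_le_norm _ _
        _ ≤ C * (ε / (3 * (C + 1))) := by
            apply mul_le_mul (hC _) ?_ (norm_nonneg _) hC0
            rw [← dist_eq_norm]; exact le_of_lt hwv
        _ ≤ ε / 3 := by
            rw [mul_comm, div_mul_eq_mul_div, div_le_div_iff₀ (by positivity) (by positivity)]
            nlinarith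
    have h1 := key m
    have h2 := key n
    have h3 := hN m hm n hn
    rw [Real.dist_eq] at h3 ⊢
    calc |⟪u (φ m), v⟫ - ⟪u (φ n), v⟫|
        ≤ |⟪u (φ m), v⟫ - ⟪u (φ m), w⟫| + |⟪u (φ m), w⟫ - ⟪u (φ n), w⟫|
          + |⟪u (φ n), w⟫ - ⟪u (φ n), v⟫| := by
            have := abs_sub_le (⟪u (φ m), v⟫) (⟪u (φ m), w⟫) (⟪u (φ n), v⟫)
            have := abs_sub_le (⟪u (φ m), w⟫) (⟪u (φ n), w⟫) (⟪u (φ n), v⟫)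
            linarith [abs_sub_le (⟪u (φ m), v⟫) (⟪u (φ m), w⟫) (⟪u (φ n), v⟫),
              abs_sub_le (⟪u (φ m), w⟫) (⟪u (φ n), w⟫) (⟪u (φ n), v⟫)]
      _ < ε := by
          rw [abs_sub_comm] at h2
          linarith
  -- convergence for all h
  have hconv : ∀ h : H, ∃ l, Tendsto (fun n => ⟪u (φ n), h⟫) atTop (nhds l) := by
    intro h
    have hp : (h - ↑(K.orthogonalProjection h)) ∈ Kᗮ :=
      K.sub_starProjection_mem_orthogonal h
    have heq : ∀ n, ⟪u (φ n), h⟫ = ⟪u (φ n), (K.orthogonalProjection h : H)⟫ := by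
      intro n
      have h0 : ⟪u (φ n), h - ↑(K.orthogonalProjection h)⟫ = 0 :=
        (Submodule.mem_orthogonal K _).1 hp _ (humem (φ n))
      have := inner_sub_right (𝕜 := ℝ) (u (φ n)) h (↑(K.orthogonalProjection h))
      linarith [h0, this]
    obtain ⟨l, hl⟩ := cauchySeq_tendsto_of_complete
      (hcauchy _ (K.orthogonalProjection h).2)
    exact ⟨l, by simpa only [heq] using hl⟩
  choose F hF using hconv
  -- F is linear and bounded
  have Fadd : ∀ a b : H, F (a + b) = F a + F b := by
    intro a b
    refine tendsto_nhds_unique (hF (a + b)) ?_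
    simpa [inner_add_right] using (hF a).add (hF b)
  have Fsmul : ∀ (c : ℝ) (a : H), F (c • a) = c * F a := by
    intro c a
    refine tendsto_nhds_unique (hF (c • a)) ?_
    simpa [real_inner_smul_right] using (hF a).const_mul c
  have Fbound : ∀ h : H, |F h| ≤ C * ‖h‖ := by
    intro h
    have habs : Tendsto (fun n => |⟪u (φ n), h⟫|) atTop (nhds |F h|) := (hF h).abs
    refine le_of_tendsto habs (Eventually.of_forall fun n => ?_)
    exact le_trans (abs_real_inner_le_norm _ _)
      (mul_le_mul_of_nonneg_right (hC _) (norm_nonneg _))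
  let Flin : H →ₗ[ℝ] ℝ :=
    { toFun := F, map_add' := Fadd, map_smul' := Fsmul }
  let Fcont : H →L[ℝ] ℝ := Flin.mkContinuous C (fun h => by
    rw [Real.norm_eq_abs]; exact Fbound h)
  refine ⟨(InnerProductSpace.toDual ℝ H).symm Fcont, φ, hφ, fun h => ?_⟩
  have hx : ⟪(InnerProductSpace.toDual ℝ H).symm Fcont, h⟫ = F h :=
    InnerProductSpace.toDual_symm_apply
  have : Tendsto (fun n => ⟪u (φ n), h⟫ - F h) atTop (nhds (F h - F h)) :=
    (hF h).sub tendsto_const_nhds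
  simp only [sub_self] at this
  refine this.congr fun n => ?_
  rw [inner_sub_left, hx]

lemma opial_uniq {H : Type*} [NormedAddCommGroup H] [InnerProductSpace ℝ H]
    (S : Set H) (x : ℝ → H)
    (h1 : ∀ z ∈ S, ∃ l : ℝ, Tendsto (fun t => ‖x t - z‖) atTop (nhds l))
    {z₁ z₂ : H} (hz₁ : z₁ ∈ S) (hz₂ : z₂ ∈ S)
    (s t : ℕ → ℝ) (hs : Tendsto s atTop atTop) (ht : Tendsto t atTop atTop)
    (hws : ∀ h : H, Tendsto (fun n => ⟪x (s n) - z₁, h⟫) atTop (nhds 0))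
    (hwt : ∀ h : H, Tendsto (fun n => ⟪x (t n) - z₂, h⟫) atTop (nhds 0)) :
    z₁ = z₂ := by
  obtain ⟨l₁, hl₁⟩ := h1 z₁ hz₁
  obtain ⟨l₂, hl₂⟩ := h1 z₂ hz₂
  set d : ℝ := ‖z₁‖ ^ 2 - ‖z₂‖ ^ 2 with hd
  have hsq : Tendsto (fun τ => ‖x τ - z₁‖ ^ 2 - ‖x τ - z₂‖ ^ 2) atTop
      (nhds (l₁ ^ 2 - l₂ ^ 2)) := (hl₁.pow 2).sub (hl₂.pow 2)
  set c : ℝ := (l₁ ^ 2 - l₂ ^ 2 - d) / 2 with hc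
  have key : ∀ τ : ℝ, (‖x τ - z₁‖ ^ 2 - ‖x τ - z₂‖ ^ 2 - d) / 2 = ⟪x τ, z₂ - z₁⟫ := by
    intro τ
    rw [hd, norm_sub_sq_real, norm_sub_sq_real, inner_sub_right]
    ring
  have hf : Tendsto (fun τ => ⟪x τ, z₂ - z₁⟫) atTop (nhds c) := by
    have := (hsq.sub_const d).div_const 2
    exact this.congr key
  -- along s : limit is ⟪z₁, z₂ - z₁⟫
  have hlim : ∀ (σ : ℕ → ℝ) (z : H), Tendsto σ atTop atTop →
      (∀ h : H, Tendsto (fun n => ⟪x (σ n) - z, h⟫) atTop (nhds 0)) →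
      ⟪z, z₂ - z₁⟫ = c := by
    intro σ z hσ hw
    have h1' : Tendsto (fun n => ⟪x (σ n), z₂ - z₁⟫) atTop (nhds c) := hf.comp hσ
    have h2' : Tendsto (fun n => ⟪x (σ n), z₂ - z₁⟫) atTop (nhds (⟪z, z₂ - z₁⟫)) := by
      have := (hw (z₂ - z₁)).add (tendsto_const_nhds (x := (⟪z, z₂ - z₁⟫ : ℝ)))
      rw [zero_add] at this
      refine this.congr fun n => ?_
      rw [inner_sub_left]; ring
    exact tendsto_nhds_unique h2' h1'
  have e₁ : ⟪z₁, z₂ - z₁⟫ = c := hlim s z₁ hs hws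
  have e₂ : ⟪z₂, z₂ - z₁⟫ = c := hlim t z₂ ht hwt
  have : ⟪z₂ - z₁, z₂ - z₁⟫ = 0 := by rw [inner_sub_left]; linarith
  have h0 : z₂ - z₁ = 0 := inner_self_eq_zero.1 this
  exact (sub_eq_zero.1 h0).symm

/-- **Opial lemma, continuous form.** If for every `z ∈ S` the limit
`lim_{t→∞} ‖x(t) - z‖` exists, and every weak sequential cluster point of `x` belongs
to `S`, then `x(t)` converges weakly to some `xbar ∈ S` as `t → +∞`. -/
theorem stmt_9 {H : Type*} [NormedAddCommGroup H] [InnerProductSpace ℝ H] [CompleteSpace H]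
    (S : Set H) (hS : S.Nonempty) (x : ℝ → H)
    (h1 : ∀ z ∈ S, ∃ l : ℝ, Tendsto (fun t => ‖x t - z‖) atTop (nhds l))
    (h2 : ∀ (t : ℕ → ℝ) (xbar : H), Tendsto t atTop atTop →
      (∀ h : H, Tendsto (fun n => ⟪x (t n) - xbar, h⟫) atTop (nhds 0)) → xbar ∈ S) :
    ∃ xbar ∈ S, ∀ h : H, Tendsto (fun t => ⟪x t - xbar, h⟫) atTop (nhds 0) := by
  obtain ⟨z₀, hz₀⟩ := hS
  obtain ⟨l₀, hl₀⟩ := h1 z₀ hz₀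
  -- eventual bound
  have hev : ∀ᶠ t in atTop, ‖x t - z₀‖ < l₀ + 1 :=
    hl₀.eventually_lt_const (lt_add_one l₀)
  obtain ⟨T, hT⟩ := eventually_atTop.1 hev
  set C : ℝ := l₀ + 1 + ‖z₀‖ with hCdef
  have hbound : ∀ t : ℝ, T ≤ t → ‖x t‖ ≤ C := by
    intro t ht
    calc ‖x t‖ = ‖x t - z₀ + z₀‖ := by rw [sub_add_cancel]
      _ ≤ ‖x t - z₀‖ + ‖z₀‖ := norm_add_le _ _
      _ ≤ C := by have := hT t ht; rw [hCdef]; linarith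
  -- first cluster point
  have htendsto0 : Tendsto (fun n : ℕ => T + (n : ℝ)) atTop atTop :=
    tendsto_atTop_add_const_left _ T tendsto_natCast_atTop_atTop
  obtain ⟨xbar, φ, hφ, hwφ⟩ := weakBW (fun n : ℕ => x (T + n)) C
    (fun n => hbound _ (le_add_of_nonneg_right (Nat.cast_nonneg n)))
  have hseq1 : Tendsto (fun n : ℕ => T + (φ n : ℝ)) atTop atTop :=
    tendsto_atTop_add_const_left _ T
      (tendsto_natCast_atTop_atTop.comp hφ.tendsto_atTop)
  have hxbarS : xbar ∈ S := h2 (fun n => T + (φ n : ℝ)) xbar hseq1 hwφ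
  refine ⟨xbar, hxbarS, fun h => ?_⟩
  by_contra hcon
  rw [Metric.tendsto_nhds] at hcon
  push_neg at hcon
  obtain ⟨ε, hε, hfreq⟩ := hcon
  have hfreq' : ∀ a : ℝ, ∃ b ≥ a, ε ≤ |⟪x b - xbar, h⟫| := by
    intro a
    obtain ⟨b, hb, hb2⟩ := frequently_atTop.1 hfreq a
    refine ⟨b, hb, ?_⟩
    simpa [Real.dist_eq] using hb2
  choose tseq htseq1 htseq2 using hfreq'
  set s : ℕ → ℝ := fun n => tseq (max (n : ℝ) T) with hsdef
  have hsge : ∀ n : ℕ, max (n : ℝ) T ≤ s n := fun n => htseq1 _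
  have hstend : Tendsto s atTop atTop :=
    tendsto_atTop_mono (fun n => le_trans (le_max_left _ _) (hsge n))
      tendsto_natCast_atTop_atTop
  obtain ⟨ybar, ψ, hψ, hwψ⟩ := weakBW (fun n => x (s n)) C
    (fun n => hbound _ (le_trans (le_max_right _ _) (hsge n)))
  have hseq2 : Tendsto (fun n => s (ψ n)) atTop atTop :=
    hstend.comp hψ.tendsto_atTop
  have hybarS : ybar ∈ S := h2 (fun n => s (ψ n)) ybar hseq2 hwψ
  have heq : xbar = ybar :=
    opial_uniq S x h1 hxbarS hybarS _ _ hseq1 hseq2 hwφ hwψ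
  subst heq
  have := (hwψ h).eventually (eventually_lt_nhds hε |>.mono fun y hy => hy)
  have hlt : ∀ᶠ n in atTop, |⟪x (s (ψ n)) - xbar, h⟫| < ε := by
    have habs : Tendsto (fun n => |⟪x (s (ψ n)) - xbar, h⟫|) atTop (nhds 0) := by
      simpa using (hwψ h).abs
    exact habs.eventually_lt_const hε
  obtain ⟨n, hn⟩ := hlt.exists
  exact absurd (htseq2 (max ((ψ n : ℕ) : ℝ) T)) (not_le.2 hn)
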